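/- For every integer k ≥ 2, with a = (k²+k-1)/(2k+1)² and b = (k²+k+1)/(2k+1)², one has (1/2)Φ(b^{-1/2}) + (1/2)Φ(a^{-1/2}) ≥ Φ(2), where Φ is the standard normal CDF. -/

import Mathlib

open Real

/-- The standard normal cumulative distribution function. -/
noncomputable def normalCDF (x : ℝ) : ℝ :=
  ∫ t in Set.Iic x, (Real.sqrt (2 * Real.pi))⁻¹ * Real.exp (-t ^ 2 / 2)

/-- The standard normal density. -/
noncomputable def normalPDF (x : ℝ) : ℝ :=
  (Real.sqrt (2 * Real.pi))⁻¹ * Real.exp (-x ^ 2 / 2)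

lemma normalPDF_pos (x : ℝ) : 0 < normalPDF x := by
  unfold normalPDF
  have h : (0:ℝ) < 2 * Real.pi := by positivity
  positivity

lemma normalPDF_integrable : MeasureTheory.Integrable normalPDF := by
  have h : normalPDF = fun t : ℝ => (Real.sqrt (2 * Real.pi))⁻¹ * Real.exp (-(1/2 : ℝ) * t ^ 2) := by
    funext t
    unfold normalPDF
    ring_nf
  rw [h]
  exact (integrable_exp_neg_mul_sq (by norm_num : (0:ℝ) < 1/2)).const_mul _

lemma normalCDF_diff {x y : ℝ} (hxy : x ≤ y) :
    normalCDF y - normalCDF x = ∫ t in Set.Ioc x y, normalPDF t := by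
  have h1 : normalCDF y - normalCDF x = ∫ t in x..y, normalPDF t := by
    unfold normalCDF
    exact intervalIntegral.integral_Iic_sub_Iic
      (normalPDF_integrable.integrableOn) (normalPDF_integrable.integrableOn)
  rw [h1, intervalIntegral.integral_of_le hxy]

lemma normalPDF_anti {u v : ℝ} (hu : 0 ≤ u) (huv : u ≤ v) : normalPDF v ≤ normalPDF u := by
  unfold normalPDF
  have : Real.exp (-v ^ 2 / 2) ≤ Real.exp (-u ^ 2 / 2) := by
    apply Real.exp_le_exp.2
    nlinarith
  exact mul_le_mul_of_nonneg_left this (by positivity)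

lemma cdf_lower {x y : ℝ} (hx : 0 ≤ x) (hxy : x ≤ y) :
    (y - x) * normalPDF y ≤ normalCDF y - normalCDF x := by
  rw [normalCDF_diff hxy]
  have h1 : ∫ _ in Set.Ioc x y, normalPDF y ≤ ∫ t in Set.Ioc x y, normalPDF t := by
    apply MeasureTheory.setIntegral_mono_on
      (MeasureTheory.integrableOn_const (by rw [Real.volume_Ioc]; exact ENNReal.ofReal_ne_top))
      normalPDF_integrable.integrableOn measurableSet_Ioc
    intro t ht
    exact normalPDF_anti (le_trans hx ht.1.le) ht.2
  have h2 : (∫ _ in Set.Ioc x y, normalPDF y) = (y - x) * normalPDF y := by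
    rw [MeasureTheory.setIntegral_const, Real.volume_real_Ioc_of_le hxy,
      smul_eq_mul]
  linarith [h1, h2.symm.le]

lemma cdf_upper {x y : ℝ} (hx : 0 ≤ x) (hxy : x ≤ y) :
    normalCDF y - normalCDF x ≤ (y - x) * normalPDF x := by
  rw [normalCDF_diff hxy]
  have h1 : (∫ t in Set.Ioc x y, normalPDF t) ≤ ∫ _ in Set.Ioc x y, normalPDF x := by
    apply MeasureTheory.setIntegral_mono_on
      normalPDF_integrable.integrableOn
      (MeasureTheory.integrableOn_const (by rw [Real.volume_Ioc]; exact ENNReal.ofReal_ne_top))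
      measurableSet_Ioc
    intro t ht
    exact normalPDF_anti hx ht.1.le
  have h2 : (∫ _ in Set.Ioc x y, normalPDF x) = (y - x) * normalPDF x := by
    rw [MeasureTheory.setIntegral_const, Real.volume_real_Ioc_of_le hxy,
      smul_eq_mul]
  linarith [h1, h2.le]

lemma reduction (s t : ℝ) (hs : 2 ≤ s) (ht0 : 0 ≤ t) (ht : t ≤ 2)
    (hG : (2 - t) * normalPDF t ≤ (s - 2) * normalPDF s) :
    normalCDF 2 ≤ 1/2 * normalCDF t + 1/2 * normalCDF s := by
  have h1 := cdf_lower (show (0:ℝ) ≤ 2 by norm_num) hs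
  have h2 := cdf_upper ht0 ht
  linarith

lemma pdf_ratio (s t : ℝ) (h : (2 - t) * Real.exp ((s ^ 2 - t ^ 2) / 2) ≤ s - 2) :
    (2 - t) * normalPDF t ≤ (s - 2) * normalPDF s := by
  unfold normalPDF
  have hc : (0:ℝ) < (Real.sqrt (2 * Real.pi))⁻¹ := by
    have h : (0:ℝ) < 2 * Real.pi := by positivity
    positivity
  have he : Real.exp (-t ^ 2 / 2) = Real.exp ((s ^ 2 - t ^ 2) / 2) * Real.exp (-s ^ 2 / 2) := by
    rw [← Real.exp_add]
    ring_nf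
  have heq : (2 - t) * ((Real.sqrt (2 * Real.pi))⁻¹ * Real.exp (-t ^ 2 / 2))
      = ((2 - t) * Real.exp ((s ^ 2 - t ^ 2) / 2)) * ((Real.sqrt (2 * Real.pi))⁻¹ * Real.exp (-s ^ 2 / 2)) := by
    rw [he]; ring
  rw [heq]
  exact mul_le_mul_of_nonneg_right h (by positivity)

set_option maxHeartbeats 1000000 in
lemma alg_big (m s t : ℝ) (hm : 12 ≤ m) (hs0 : 0 < s) (ht0 : 0 < t)
    (hs2 : s ^ 2 = (4 * m + 1) / (m - 1)) (ht2 : t ^ 2 = (4 * m + 1) / (m + 1)) :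
    (2 - t) * Real.exp ((s ^ 2 - t ^ 2) / 2) ≤ s - 2 := by
  have hm1 : (0:ℝ) < m - 1 := by linarith
  have hm2 : (0:ℝ) < m + 1 := by linarith
  have hs4 : (s ^ 2 - 4) * (m - 1) = 5 := by
    rw [hs2]; field_simp; ring
  have ht4 : (4 - t ^ 2) * (m + 1) = 3 := by
    rw [ht2]; field_simp; ring
  have hsq : (4:ℝ) < s ^ 2 := by rw [hs2, lt_div_iff₀ hm1]; linarith
  have htq : t ^ 2 < 4 := by rw [ht2, div_lt_iff₀ hm2]; linarith
  have hsgt : 2 < s := by nlinarith [hsq, hs0]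
  have htlt : t < 2 := by nlinarith [htq, ht0]
  -- upper bound on s
  have hs_up : s ≤ (8 * m - 3) / (4 * (m - 1)) := by
    apply le_of_pow_le_pow_left₀ two_ne_zero (div_nonneg (by linarith) (by linarith))
    rw [hs2, div_pow, div_le_div_iff₀ hm1 (by positivity)]
    nlinarith
  -- lower bound on t
  have ht_low : (4 * m + 1) / (2 * (m + 1)) ≤ t := by
    apply le_of_pow_le_pow_left₀ two_ne_zero ht0.le
    rw [ht2, div_pow, div_le_div_iff₀ (by positivity) hm2]
    nlinarith
  have hA : 20 ≤ (s - 2) * (16 * m - 11) := by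
    have h1 : (s + 2) * (4 * (m - 1)) ≤ 16 * m - 11 := by
      have := (le_div_iff₀ (by positivity : (0:ℝ) < 4 * (m - 1))).1 hs_up
      nlinarith
    nlinarith [mul_le_mul_of_nonneg_left h1 (by linarith : (0:ℝ) ≤ s - 2)]
  have hB : (2 - t) * (8 * m + 5) ≤ 6 := by
    have h1 : 8 * m + 5 ≤ (2 + t) * (2 * (m + 1)) := by
      have := (div_le_iff₀ (by positivity : (0:ℝ) < 2 * (m + 1))).1 ht_low
      nlinarith
    nlinarith [mul_le_mul_of_nonneg_left h1 (by linarith : (0:ℝ) ≤ 2 - t)]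
  -- exponent
  have hx : (s ^ 2 - t ^ 2) / 2 = (4 * m + 1) / (m ^ 2 - 1) := by
    rw [hs2, ht2]
    have h1 : (m:ℝ) ^ 2 - 1 ≠ 0 := by nlinarith
    field_simp
    ring
  rw [hx]
  set x : ℝ := (4 * m + 1) / (m ^ 2 - 1) with hxdef
  have hden : (0:ℝ) < m ^ 2 - 1 := by nlinarith
  have hden2 : (0:ℝ) < m ^ 2 - 4 * m - 2 := by nlinarith
  have h1x : (1 - x) * (m ^ 2 - 1) = m ^ 2 - 4 * m - 2 := by
    rw [hxdef]; field_simp; ring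
  have hE1 : Real.exp x * (1 - x) ≤ 1 := by
    have h := Real.add_one_le_exp (-x)
    have h2 : Real.exp x * Real.exp (-x) = 1 := by
      rw [← Real.exp_add]; simp
    calc Real.exp x * (1 - x) = Real.exp x * (-x + 1) := by ring
      _ ≤ Real.exp x * Real.exp (-x) := mul_le_mul_of_nonneg_left h (Real.exp_pos x).le
      _ = 1 := h2
  have hE0 : (0:ℝ) < Real.exp x := Real.exp_pos x
  have e_bound : Real.exp x * (m ^ 2 - 4 * m - 2) ≤ m ^ 2 - 1 := by
    have h := mul_le_mul_of_nonneg_right hE1 hden.le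
    calc Real.exp x * (m ^ 2 - 4 * m - 2) = Real.exp x * (1 - x) * (m ^ 2 - 1) := by
          rw [← h1x]; ring
      _ ≤ 1 * (m ^ 2 - 1) := h
      _ = m ^ 2 - 1 := one_mul _
  have h16 : (0:ℝ) < 16 * m - 11 := by linarith
  have hD : (0:ℝ) < (8 * m + 5) * (m ^ 2 - 4 * m - 2) := by positivity
  -- combine: (2-t)*exp x ≤ 6(m²-1)/D ≤ 20/(16m-11) ≤ s-2
  have step1 : (2 - t) * Real.exp x ≤ 6 * (m ^ 2 - 1) / ((8 * m + 5) * (m ^ 2 - 4 * m - 2)) := by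
    rw [le_div_iff₀ hD]
    have h := mul_le_mul hB e_bound (mul_nonneg hE0.le hden2.le) (by norm_num)
    calc (2 - t) * Real.exp x * ((8 * m + 5) * (m ^ 2 - 4 * m - 2))
        = (2 - t) * (8 * m + 5) * (Real.exp x * (m ^ 2 - 4 * m - 2)) := by ring
      _ ≤ 6 * (m ^ 2 - 1) := h
  have step2 : 6 * (m ^ 2 - 1) / ((8 * m + 5) * (m ^ 2 - 4 * m - 2)) ≤ 20 / (16 * m - 11) := by
    rw [div_le_div_iff₀ hD h16]
    nlinarith [mul_nonneg (mul_nonneg (by linarith : (0:ℝ) ≤ m - 12) (by linarith : (0:ℝ) ≤ m))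
      (by linarith : (0:ℝ) ≤ m), mul_nonneg (by linarith : (0:ℝ) ≤ m - 12) (by linarith : (0:ℝ) ≤ m)]
  have step3 : 20 / (16 * m - 11) ≤ s - 2 := by
    rw [div_le_iff₀ h16]
    linarith
  linarith

lemma alg_six (s t : ℝ) (hs0 : 0 < s) (ht0 : 0 < t)
    (hs2 : s ^ 2 = 5) (ht2 : t ^ 2 = 25 / 7) :
    (2 - t) * Real.exp ((s ^ 2 - t ^ 2) / 2) ≤ s - 2 := by
  have hx : (s ^ 2 - t ^ 2) / 2 = 5 / 7 := by rw [hs2, ht2]; norm_num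
  rw [hx]
  have hs : (2.236:ℝ) ≤ s := by
    apply le_of_pow_le_pow_left₀ two_ne_zero hs0.le
    rw [hs2]; norm_num
  have ht : (1.889:ℝ) ≤ t := by
    apply le_of_pow_le_pow_left₀ two_ne_zero ht0.le
    rw [ht2]; norm_num
  have htlt : t < 2 := by nlinarith
  have hexp : Real.exp (5 / 7) ≤ 2.044 := by
    have h7 : Real.exp (5 / 7) ^ 7 = Real.exp 5 := by
      rw [← Real.exp_nat_mul]; norm_num
    have h5 : Real.exp 5 ≤ (2.044:ℝ) ^ 7 := by
      have h1 : Real.exp 5 = Real.exp 1 ^ 5 := by rw [← Real.exp_nat_mul]; norm_num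
      have h2 : Real.exp 1 ^ 5 ≤ (2.7182818286:ℝ) ^ 5 :=
        pow_le_pow_left₀ (Real.exp_pos 1).le Real.exp_one_lt_d9.le 5
      rw [h1]
      calc Real.exp 1 ^ 5 ≤ (2.7182818286:ℝ) ^ 5 := h2
        _ ≤ (2.044:ℝ) ^ 7 := by norm_num
    apply le_of_pow_le_pow_left₀ (by norm_num : (7:ℕ) ≠ 0) (by norm_num)
    rw [h7]; exact h5
  have h2t : (0:ℝ) ≤ 2 - t := by linarith
  calc (2 - t) * Real.exp (5 / 7) ≤ (2 - t) * 2.044 := mul_le_mul_of_nonneg_left hexp h2t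
    _ ≤ 0.111 * 2.044 := by nlinarith
    _ ≤ s - 2 := by nlinarith

theorem stmt_8 (k : ℕ) (hk : 2 ≤ k) :
    (1/2) * normalCDF ((Real.sqrt (((k : ℝ) ^ 2 + k + 1) / (2 * (k : ℝ) + 1) ^ 2))⁻¹) +
    (1/2) * normalCDF ((Real.sqrt (((k : ℝ) ^ 2 + k - 1) / (2 * (k : ℝ) + 1) ^ 2))⁻¹) ≥
      normalCDF 2 := by
  have hk' : (2:ℝ) ≤ (k:ℝ) := by exact_mod_cast hk
  set m : ℝ := (k:ℝ) ^ 2 + (k:ℝ) with hm_def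
  have hm6 : (6:ℝ) ≤ m := by nlinarith
  have hBeq : ((k : ℝ) ^ 2 + k + 1) / (2 * (k : ℝ) + 1) ^ 2 = (m + 1) / (4 * m + 1) := by
    rw [hm_def]; congr 1 <;> ring
  have hAeq : ((k : ℝ) ^ 2 + k - 1) / (2 * (k : ℝ) + 1) ^ 2 = (m - 1) / (4 * m + 1) := by
    rw [hm_def]; congr 1 <;> ring
  rw [hBeq, hAeq, ge_iff_le]
  have h4m : (0:ℝ) < 4 * m + 1 := by linarith
  have hm1 : (0:ℝ) < m - 1 := by linarith
  have hm2 : (0:ℝ) < m + 1 := by linarith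
  set s : ℝ := (Real.sqrt ((m - 1) / (4 * m + 1)))⁻¹ with hs_def
  set t : ℝ := (Real.sqrt ((m + 1) / (4 * m + 1)))⁻¹ with ht_def
  have hs0 : 0 < s := by
    rw [hs_def]
    exact inv_pos.2 (Real.sqrt_pos.2 (div_pos hm1 h4m))
  have ht0 : 0 < t := by
    rw [ht_def]
    exact inv_pos.2 (Real.sqrt_pos.2 (div_pos hm2 h4m))
  have hs2 : s ^ 2 = (4 * m + 1) / (m - 1) := by
    rw [hs_def, inv_pow, Real.sq_sqrt (le_of_lt (div_pos hm1 h4m)), inv_div]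
  have ht2 : t ^ 2 = (4 * m + 1) / (m + 1) := by
    rw [ht_def, inv_pow, Real.sq_sqrt (le_of_lt (div_pos hm2 h4m)), inv_div]
  have hs_ge : 2 ≤ s := by
    have h4 : (4:ℝ) ≤ s ^ 2 := by
      rw [hs2, le_div_iff₀ hm1]; linarith
    nlinarith
  have ht_le : t ≤ 2 := by
    have h4 : t ^ 2 ≤ 4 := by
      rw [ht2, div_le_iff₀ hm2]; linarith
    nlinarith
  apply reduction s t hs_ge ht0.le ht_le
  apply pdf_ratio
  rcases eq_or_lt_of_le hk with h2 | h3
  · -- k = 2, m = 6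
    have hk2 : (k:ℝ) = 2 := by exact_mod_cast h2.symm
    have hm : m = 6 := by rw [hm_def, hk2]; norm_num
    apply alg_six s t hs0 ht0
    · rw [hs2, hm]; norm_num
    · rw [ht2, hm]; norm_num
  · -- k ≥ 3, m ≥ 12
    have hk3 : (3:ℝ) ≤ (k:ℝ) := by exact_mod_cast h3
    have hm : (12:ℝ) ≤ m := by nlinarith
    exact alg_big m s t hm hs0 ht0 hs2 ht2
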